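/- For an envy graph defined by utilities u_i(A_j), either there exists an envy cycle or there exists an addable set (i.e., at least one of the two always exists when some envy edge exists; if no envy edge exists, N itself is an addable set). -/

import Mathlib

def EnvyEdge {N : Type*} (a : N → N → ℝ) (i j : N) : Prop := a i i < a i j

def EqEdge {N : Type*} (a : N → N → ℝ) (i j : N) : Prop := a i i = a i j

def Addable {N : Type*} (a : N → N → ℝ) (S : Finset N) : Prop :=
  S.Nonempty ∧ (∀ i ∈ S, ∀ j ∈ S, ¬ EnvyEdge a i j) ∧
    (∀ i, i ∉ S → ∀ j ∈ S, ¬ EnvyEdge a i j ∧ ¬ EqEdge a i j)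

def HasEnvyCycle {N : Type*} (a : N → N → ℝ) : Prop :=
  ∃ (k : ℕ) (c : Fin (k + 1) → N),
    (∀ t, EnvyEdge a (c t) (c (t + 1)) ∨ EqEdge a (c t) (c (t + 1))) ∧
      ∃ t, EnvyEdge a (c t) (c (t + 1))

open Relation

private def E {N : Type*} (a : N → N → ℝ) (i j : N) : Prop :=
  EnvyEdge a i j ∨ EqEdge a i j

private lemma cycle_of_back {N : Type*} (a : N → N → ℝ) {j k : N}
    (henvy : EnvyEdge a j k) (hp : ReflTransGen (E a) k j) : HasEnvyCycle a := by
  obtain ⟨l, hc, hl⟩ := List.exists_isChain_cons_of_relationReflTransGen hp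
  set L : List N := k :: l with hL
  have hchain : L.IsChain (E a) := hc
  have hlen : L.length = l.length + 1 := rfl
  set n := l.length with hn
  refine ⟨n, fun t => L.get ⟨t.val, by rw [hlen]; exact t.isLt⟩, ?_, ?_⟩
  · intro t
    by_cases ht : t.val < n
    · have h1 : ((t + 1 : Fin (n+1))).val = t.val + 1 := by
        simp [Fin.add_def, Nat.mod_eq_of_lt]; omega
      have := List.isChain_iff_getElem.mp hchain t.val (by simp [hlen]; omega)
      simp only [h1]
      exact this
    · have htv : t.val = n := by omega
      have h1 : ((t + 1 : Fin (n+1))).val = 0 := by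
        simp [Fin.add_def, htv]
      have hlast : L.get ⟨n, by simp [hlen]⟩ = j := by
        rw [← hl]
        rw [List.getLast_eq_getElem]
        congr 1
      have hhead : L.get ⟨0, by simp [hlen]⟩ = k := rfl
      simp only [htv, h1]
      rw [hlast, hhead]
      exact Or.inl henvy
  · refine ⟨Fin.last n, ?_⟩
    have h1 : ((Fin.last n + 1 : Fin (n+1))).val = 0 := by
      simp [Fin.add_def]
    have hlast : L.get ⟨(Fin.last n).val, by simp [hlen]⟩ = j := by
      rw [← hl, List.getLast_eq_getElem]
      congr 1
    simp only [h1]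
    rw [hlast]
    exact henvy

theorem envy_cycle_or_addable {N : Type*} [Fintype N] [DecidableEq N] [Nonempty N]
    (a : N → N → ℝ) :
    (HasEnvyCycle a ∨ ∃ S : Finset N, Addable a S) ∧
      (¬ (∃ i j, EnvyEdge a i j) → Addable a (Finset.univ : Finset N)) := by
  classical
  constructor
  · by_cases hcyc : HasEnvyCycle a
    · exact Or.inl hcyc
    · right
      -- strict reachability relation
      set R : N → N → Prop := ReflTransGen (E a) with hR
      let S : N → N → Prop := fun j i => R j i ∧ ¬ R i j
      have htrans : Transitive S := by
        rintro x y z ⟨h1, h2⟩ ⟨h3, h4⟩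
        exact ⟨h1.trans h3, fun h => h2 (h3.trans h)⟩
      have hirr : ∀ x, ¬ S x x := by rintro x ⟨h1, h2⟩; exact h2 h1
      haveI : IsTrans N S := ⟨fun x y z h1 h2 => htrans h1 h2⟩
      haveI : IsIrrefl N S := ⟨hirr⟩
      have hwf : WellFounded S := Finite.wellFounded_of_trans_of_irrefl S
      obtain ⟨i, -, hmin⟩ := hwf.has_min Set.univ ⟨Classical.arbitrary N, trivial⟩
      have hmin' : ∀ j, R j i → R i j := by
        intro j hj
        by_contra hc
        exact hmin j trivial ⟨hj, hc⟩
      refine ⟨Finset.univ.filter (fun j => R i j ∧ R j i), ⟨i, Finset.mem_filter.mpr ⟨Finset.mem_univ i, ReflTransGen.refl, ReflTransGen.refl⟩⟩,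
        ?_, ?_⟩
      · intro x hx y hy he
        simp only [Finset.mem_filter] at hx hy
        exact hcyc (cycle_of_back a he ((hy.2.2.trans hx.2.1)))
      · intro x hx y hy
        simp only [Finset.mem_filter, Finset.mem_univ, true_and] at hx hy
        constructor
        · intro he
          have hRxy : R x y := ReflTransGen.single (Or.inl he)
          have : R x i := hRxy.trans hy.2
          exact hx ⟨hmin' x this, this⟩
        · intro he
          have hRxy : R x y := ReflTransGen.single (Or.inr he)
          have : R x i := hRxy.trans hy.2
          exact hx ⟨hmin' x this, this⟩
  · intro hno
    refine ⟨Finset.univ_nonempty, ?_, ?_⟩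
    · intro x _ y _ he
      exact hno ⟨x, y, he⟩
    · intro x hx
      exact absurd (Finset.mem_univ x) hx
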